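/- Let M ∈ ℝ^{3×3} be symmetric, R ∈ SO(3), and Ω ∈ ℝ³. Then vex(P_a(M R [Ω]_×)) = ½ (Tr(M R)·I₃ − Rᵀ M) Ω. In particular, if R(t) is a differentiable curve in SO(3) with Ṙ = R[Ω]_×, then (d/dt) vex(P_a(M R)) = ½ (Tr(M R)·I₃ − Rᵀ M) Ω. -/

import Mathlib

open Matrix

attribute [local instance] Matrix.frobeniusNormedAddCommGroup Matrix.frobeniusNormedSpace

/-- The hat map `[y]ₓ`: the 3×3 skew-symmetric matrix with `[y]ₓ x = y × x`. -/
def hat (y : Fin 3 → ℝ) : Matrix (Fin 3) (Fin 3) ℝ :=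
  !![0, -y 2, y 1; y 2, 0, -y 0; -y 1, y 0, 0]

/-- `vex(𝒫ₐ(A)) = ½ [A₃₂ − A₂₃, A₁₃ − A₃₁, A₂₁ − A₁₂]ᵀ`. -/
noncomputable def vexPa (A : Matrix (Fin 3) (Fin 3) ℝ) : Fin 3 → ℝ :=
  ![(A 2 1 - A 1 2) / 2, (A 0 2 - A 2 0) / 2, (A 1 0 - A 0 1) / 2]



lemma key (M R : Matrix (Fin 3) (Fin 3) ℝ) (hM : Mᵀ = M) (Ω : Fin 3 → ℝ) :
    vexPa (M * R * hat Ω) =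
      (2 : ℝ)⁻¹ • ((M * R).trace • (1 : Matrix (Fin 3) (Fin 3) ℝ) - Rᵀ * M).mulVec Ω := by
  have h01 : M 0 1 = M 1 0 := by conv_lhs => rw [← hM, transpose_apply]
  have h02 : M 0 2 = M 2 0 := by conv_lhs => rw [← hM, transpose_apply]
  have h12 : M 1 2 = M 2 1 := by conv_lhs => rw [← hM, transpose_apply]
  funext i
  fin_cases i <;>
    simp [vexPa, hat, Matrix.mul_apply, Matrix.mulVec, Matrix.trace, Matrix.diag,
      Fin.sum_univ_succ, dotProduct, Matrix.one_apply, h01, h02, h12] <;> ring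

noncomputable def vexPaL (M : Matrix (Fin 3) (Fin 3) ℝ) :
    Matrix (Fin 3) (Fin 3) ℝ →ₗ[ℝ] (Fin 3 → ℝ) where
  toFun A := vexPa (M * A)
  map_add' A B := by
    funext i; fin_cases i <;>
      simp [vexPa, Matrix.mul_apply, Fin.sum_univ_succ, mul_add] <;> ring
  map_smul' c A := by
    funext i; fin_cases i <;>
      simp [vexPa, Matrix.mul_apply, Fin.sum_univ_succ, mul_add, Finset.mul_sum] <;> ring

lemma deriv_part (M : Matrix (Fin 3) (Fin 3) ℝ) (hM : Mᵀ = M) (Ω : Fin 3 → ℝ)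
    (Rc : ℝ → Matrix (Fin 3) (Fin 3) ℝ)
    (hRcDeriv : ∀ t, HasDerivAt Rc (Rc t * hat Ω) t) (t : ℝ) :
    HasDerivAt (fun s => vexPa (M * Rc s))
      ((2 : ℝ)⁻¹ •
        ((M * Rc t).trace • (1 : Matrix (Fin 3) (Fin 3) ℝ) - (Rc t)ᵀ * M).mulVec Ω) t := by
  have h := ((vexPaL M).toContinuousLinearMap.hasFDerivAt).comp_hasDerivAt t (hRcDeriv t)
  have h2 : (vexPaL M).toContinuousLinearMap (Rc t * hat Ω) =
      (2 : ℝ)⁻¹ • ((M * Rc t).trace • (1 : Matrix (Fin 3) (Fin 3) ℝ) - (Rc t)ᵀ * M).mulVec Ω := by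
    show vexPa (M * (Rc t * hat Ω)) = _
    rw [← mul_assoc]; exact key M (Rc t) hM Ω
  have h := h.congr_deriv h2
  exact h

/-- for symmetric `M`, `R ∈ SO(3)` and `Ω ∈ ℝ³`,
`vex(𝒫ₐ(M R [Ω]ₓ)) = ½ (Tr(M R)·I₃ − Rᵀ M) Ω`; in particular, along a
differentiable curve `Rc` on SO(3) with `Ṙc = Rc [Ω]ₓ`,
`(d/dt) vex(𝒫ₐ(M Rc)) = ½ (Tr(M Rc)·I₃ − Rcᵀ M) Ω`. -/
theorem vexPa_deriv (M R : Matrix (Fin 3) (Fin 3) ℝ) (hM : Mᵀ = M)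
    (hR : Rᵀ * R = 1) (hRdet : R.det = 1) (Ω : Fin 3 → ℝ)
    (Rc : ℝ → Matrix (Fin 3) (Fin 3) ℝ)
    (hRc : ∀ t, (Rc t)ᵀ * Rc t = 1 ∧ (Rc t).det = 1)
    (hRcDeriv : ∀ t, HasDerivAt Rc (Rc t * hat Ω) t) :
    vexPa (M * R * hat Ω) =
        (2 : ℝ)⁻¹ • ((M * R).trace • (1 : Matrix (Fin 3) (Fin 3) ℝ) - Rᵀ * M).mulVec Ω ∧
      ∀ t, HasDerivAt (fun s => vexPa (M * Rc s))
        ((2 : ℝ)⁻¹ •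
          ((M * Rc t).trace • (1 : Matrix (Fin 3) (Fin 3) ℝ) - (Rc t)ᵀ * M).mulVec Ω) t := by
  exact ⟨key M R hM Ω, fun t => deriv_part M hM Ω Rc hRcDeriv t⟩
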